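/- (Stability of the rigid-type interpolant.) Let m ≥ 1 be an integer, L > 0, c > 0, M > 0. Let ρ : [0, L] → ℝ² be m-times continuously differentiable with ‖ρ^{(m)}(t)‖ ≤ M for all t ∈ [0, L] and with ‖ρ(L) − ρ(0)‖ ≥ c·L. Let u : [0, L] → ℝ² be absolutely continuous with u' ∈ L²(0, L). Define the rigid-type interpolant u_I^R(t) = u(0) + 𝔸(ρ(t)) 𝔹⁻¹ (u(L) − u(0)), where 𝔸 is anchored at ν̄ = ρ(0) and 𝔹 is formed from ν̄ = ρ(0), ν' = ρ(L). Then ‖(u_I^R)^{(m)}‖_{L²(0,L)} ≤ (M/c) · ‖u'‖_{L²(0,L)}. -/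

import Mathlib

open MeasureTheory intervalIntegral

/-- The matrix field `𝔸(x)` anchored at `ν`. -/
def matA (ν x : Fin 2 → ℝ) : Matrix (Fin 2) (Fin 2) ℝ :=
  !![x 0 - ν 0, -(x 1 - ν 1); x 1 - ν 1, x 0 - ν 0]

/-- The matrix `𝔹 = [[ν'₁ − ν̄₁, −(ν'₂ − ν̄₂)], [ν'₂ − ν̄₂, ν'₁ − ν̄₁]]`. -/
def matB (ν ν' : Fin 2 → ℝ) : Matrix (Fin 2) (Fin 2) ℝ :=
  !![ν' 0 - ν 0, -(ν' 1 - ν 1); ν' 1 - ν 1, ν' 0 - ν 0]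

/-- The Euclidean norm on `ℝ²`. -/
noncomputable def euclNorm (v : Fin 2 → ℝ) : ℝ := Real.sqrt (v 0 ^ 2 + v 1 ^ 2)

lemma euclNorm_nonneg (v : Fin 2 → ℝ) : 0 ≤ euclNorm v := Real.sqrt_nonneg _

lemma continuous_euclNorm : Continuous euclNorm := by
  unfold euclNorm; fun_prop

/-- The "complex multiplication by `w`" matrix. -/
noncomputable def cmat (w : Fin 2 → ℝ) : Matrix (Fin 2) (Fin 2) ℝ :=
  !![w 0, -(w 1); w 1, w 0]

lemma cmat_mulVec (w y : Fin 2 → ℝ) :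
    (cmat w).mulVec y = ![w 0 * y 0 - w 1 * y 1, w 1 * y 0 + w 0 * y 1] := by
  funext i
  fin_cases i <;> simp [cmat, Matrix.mulVec, dotProduct, Fin.sum_univ_two] <;> ring

lemma euclNorm_cmat_mulVec (w y : Fin 2 → ℝ) :
    euclNorm ((cmat w).mulVec y) = euclNorm w * euclNorm y := by
  rw [cmat_mulVec]
  unfold euclNorm
  rw [← Real.sqrt_mul (by positivity)]
  congr 1
  simp only [Matrix.cons_val_zero, Matrix.cons_val_one, Matrix.head_cons]
  ring

lemma cmat_det (w : Fin 2 → ℝ) : (cmat w).det = w 0 ^ 2 + w 1 ^ 2 := by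
  simp [cmat, Matrix.det_fin_two_of]
  ring

lemma matB_eq_cmat (ν ν' : Fin 2 → ℝ) : matB ν ν' = cmat (ν' - ν) := by
  unfold matB cmat
  congr 1 <;> simp [Pi.sub_apply]

lemma matA_mulVec (ν x w : Fin 2 → ℝ) :
    (matA ν x).mulVec w = (cmat w).mulVec (x - ν) := by
  rw [cmat_mulVec]
  funext i
  fin_cases i <;> simp [matA, Matrix.mulVec, dotProduct, Fin.sum_univ_two,
    Pi.sub_apply] <;> ring

lemma my_iteratedDeriv_const_add {F : Type*} [NormedAddCommGroup F] [NormedSpace ℝ F]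
    {n : ℕ} (hn : 0 < n) (c : F) (f : ℝ → F) (x : ℝ) :
    iteratedDeriv n (fun z => c + f z) x = iteratedDeriv n f x := by
  rw [← iteratedDerivWithin_univ, ← iteratedDerivWithin_univ]
  exact iteratedDerivWithin_const_add hn c

lemma my_iteratedDeriv_clm_comp {F G : Type*} [NormedAddCommGroup F] [NormedSpace ℝ F]
    [NormedAddCommGroup G] [NormedSpace ℝ G] {n : ℕ} (g : F →L[ℝ] G) {f : ℝ → F}
    (hf : ContDiff ℝ n f) (t : ℝ) :
    iteratedDeriv n (fun s => g (f s)) t = g (iteratedDeriv n f t) := by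
  have h := g.iteratedFDeriv_comp_left (hf.contDiffAt (x := t)) (i := n) le_rfl
  simp only [iteratedDeriv_eq_iteratedFDeriv, ← Function.comp_def, h]
  rfl

set_option maxHeartbeats 1000000 in
theorem rigid_interpolant_stability (m : ℕ) (hm : 1 ≤ m) (L c M : ℝ)
    (hL : 0 < L) (hc : 0 < c) (hM : 0 < M)
    (ρ : ℝ → Fin 2 → ℝ) (hρ : ContDiff ℝ m ρ)
    (hbound : ∀ t ∈ Set.Icc 0 L, euclNorm (iteratedDeriv m ρ t) ≤ M)
    (hchord : c * L ≤ euclNorm (ρ L - ρ 0))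
    (u u' : ℝ → Fin 2 → ℝ)
    (hint : IntervalIntegrable u' volume 0 L)
    (hL2 : IntegrableOn (fun t => euclNorm (u' t) ^ 2) (Set.Icc 0 L))
    (hAC : ∀ t ∈ Set.Icc 0 L, u t = u 0 + ∫ s in (0:ℝ)..t, u' s) :
    Real.sqrt (∫ t in (0:ℝ)..L,
        euclNorm (iteratedDeriv m
          (fun t => u 0 +
            (matA (ρ 0) (ρ t)).mulVec ((matB (ρ 0) (ρ L))⁻¹.mulVec (u L - u 0))) t) ^ 2) ≤
      (M / c) * Real.sqrt (∫ t in (0:ℝ)..L, euclNorm (u' t) ^ 2) := by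
  have hmpos : 0 < m := hm
  set v : Fin 2 → ℝ := u L - u 0 with hv
  set w : Fin 2 → ℝ := (matB (ρ 0) (ρ L))⁻¹.mulVec v with hw
  set W : ℝ := euclNorm w with hWdef
  set N : ℝ := euclNorm (ρ L - ρ 0) with hNdef
  have hWnn : 0 ≤ W := euclNorm_nonneg _
  have hNpos : 0 < N := lt_of_lt_of_le (mul_pos hc hL) hchord
  -- determinant of B is positive
  have hBdet : IsUnit (matB (ρ 0) (ρ L)).det := by
    rw [matB_eq_cmat, cmat_det]
    have : 0 < (ρ L - ρ 0) 0 ^ 2 + (ρ L - ρ 0) 1 ^ 2 := by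
      have := hNpos
      rw [hNdef] at this
      unfold euclNorm at this
      exact Real.sqrt_pos.1 this
    exact isUnit_iff_ne_zero.2 (ne_of_gt this)
  have hBw : (matB (ρ 0) (ρ L)).mulVec w = v := by
    rw [hw, Matrix.mulVec_mulVec, Matrix.mul_nonsing_inv _ hBdet, Matrix.one_mulVec]
  have hNW : N * W = euclNorm v := by
    have h := euclNorm_cmat_mulVec (ρ L - ρ 0) w
    rw [← matB_eq_cmat, hBw] at h
    exact h.symm
  -- the continuous linear map x ↦ (cmat w).mulVec x
  set T : (Fin 2 → ℝ) →L[ℝ] (Fin 2 → ℝ) :=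
    LinearMap.toContinuousLinearMap ((cmat w).mulVecLin) with hT
  have hTapp : ∀ x, T x = (cmat w).mulVec x := fun x => rfl
  -- rewrite the iterated derivative of the interpolant
  have hkey : ∀ t : ℝ, iteratedDeriv m
      (fun t => u 0 + (matA (ρ 0) (ρ t)).mulVec ((matB (ρ 0) (ρ L))⁻¹.mulVec (u L - u 0))) t
      = (cmat w).mulVec (iteratedDeriv m ρ t) := by
    intro t
    have h1 : (fun t => u 0 +
        (matA (ρ 0) (ρ t)).mulVec ((matB (ρ 0) (ρ L))⁻¹.mulVec (u L - u 0)))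
        = fun t => (u 0 - T (ρ 0)) + T (ρ t) := by
      funext s
      rw [← hv, ← hw, matA_mulVec]
      have h2 : (cmat w).mulVec (ρ s - ρ 0) = T (ρ s) - T (ρ 0) := by
        rw [← map_sub T, hTapp]
      rw [h2]
      abel
    rw [h1, my_iteratedDeriv_const_add hmpos, my_iteratedDeriv_clm_comp T hρ t, hTapp]
  simp only [← hv, ← hw] at hkey
  simp only [hkey, euclNorm_cmat_mulVec, ← hWdef]
  -- bound the left integral
  have hρcont : Continuous (iteratedDeriv m ρ) :=
    hρ.continuous_iteratedDeriv m le_rfl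
  have hGint : IntervalIntegrable (fun t => (W * euclNorm (iteratedDeriv m ρ t)) ^ 2)
      volume 0 L :=
    ((continuous_const.mul (continuous_euclNorm.comp hρcont)).pow 2).intervalIntegrable _ _
  have hmono : (∫ t in (0:ℝ)..L, (W * euclNorm (iteratedDeriv m ρ t)) ^ 2)
      ≤ ∫ _t in (0:ℝ)..L, (M * W) ^ 2 := by
    refine intervalIntegral.integral_mono_on hL.le hGint (intervalIntegrable_const) ?_
    intro t ht
    have h1 := hbound t ht
    have h2 := euclNorm_nonneg (iteratedDeriv m ρ t)
    calc (W * euclNorm (iteratedDeriv m ρ t)) ^ 2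
        = W ^ 2 * (euclNorm (iteratedDeriv m ρ t) * euclNorm (iteratedDeriv m ρ t)) := by ring
      _ ≤ W ^ 2 * (M * M) :=
          mul_le_mul_of_nonneg_left (mul_self_le_mul_self h2 h1) (sq_nonneg W)
      _ = (M * W) ^ 2 := by ring
  have hconstI : (∫ _t in (0:ℝ)..L, (M * W) ^ 2) = L * (M * W) ^ 2 := by
    simp [intervalIntegral.integral_const, smul_eq_mul]
  have hstep1 : Real.sqrt (∫ t in (0:ℝ)..L, (W * euclNorm (iteratedDeriv m ρ t)) ^ 2)
      ≤ Real.sqrt L * (M * W) := by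
    have h3 : Real.sqrt (L * (M * W) ^ 2) = Real.sqrt L * (M * W) := by
      rw [Real.sqrt_mul hL.le, Real.sqrt_sq (by positivity)]
    rw [← h3]
    exact Real.sqrt_le_sqrt (hmono.trans_eq hconstI)
  -- Cauchy–Schwarz bound for ‖v‖
  set μ : Measure ℝ := volume.restrict (Set.Ioc 0 L) with hμdef
  have hμuniv : μ Set.univ = ENNReal.ofReal L := by
    rw [hμdef, Measure.restrict_apply_univ, Real.volume_Ioc, sub_zero]
  haveI : IsFiniteMeasure μ := ⟨by rw [hμuniv]; exact ENNReal.ofReal_lt_top⟩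
  set F : ℝ → ℝ := fun t => euclNorm (u' t) with hFdef
  have hu'm : AEStronglyMeasurable u' μ :=
    ((intervalIntegrable_iff_integrableOn_Ioc_of_le hL.le).1 hint).aestronglyMeasurable
  have hFm : AEStronglyMeasurable F μ := continuous_euclNorm.comp_aestronglyMeasurable hu'm
  have hF2 : Integrable (fun t => F t ^ 2) μ := hL2.mono_set Set.Ioc_subset_Icc_self
  have hF1 : Integrable F μ := by
    refine Integrable.mono' ((integrable_const (1:ℝ)).add hF2) hFm ?_
    filter_upwards with t
    rw [Real.norm_of_nonneg (euclNorm_nonneg _)]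
    have := euclNorm_nonneg (u' t)
    simp only [hFdef, Pi.add_apply]
    nlinarith [sq_nonneg (euclNorm (u' t) - 1)]
  have htwo : ENNReal.ofReal 2 = 2 := by norm_num
  have hmem2 : MemLp F (ENNReal.ofReal 2) μ := by
    rw [htwo]; exact (memLp_two_iff_integrable_sq hFm).2 hF2
  have hmem1 : MemLp (fun _ : ℝ => (1:ℝ)) (ENNReal.ofReal 2) μ := by
    rw [htwo]; exact memLp_const 1
  have hhold := integral_mul_le_Lp_mul_Lq_of_nonneg (μ := μ)
    Real.HolderConjugate.two_two
    (Filter.Eventually.of_forall fun t => euclNorm_nonneg (u' t))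
    (Filter.Eventually.of_forall fun _ => zero_le_one) hmem2 hmem1
  have hrpow2 : ∀ x : ℝ, x ^ (2:ℝ) = x ^ 2 := fun x => by
    rw [show (2:ℝ) = ((2:ℕ):ℝ) by norm_num, Real.rpow_natCast]
  have hconst1 : (∫ _a, (1:ℝ) ^ (2:ℝ) ∂μ) = L := by
    simp only [Real.one_rpow]
    rw [MeasureTheory.integral_const, measureReal_def, hμuniv, smul_eq_mul, mul_one, ENNReal.toReal_ofReal hL.le]
  rw [hconst1] at hhold
  simp only [mul_one, hrpow2] at hhold
  -- hhold : ∫ F dμ ≤ (∫ F² dμ) ^ (1/2) * L ^ (1/2)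
  rw [← Real.sqrt_eq_rpow, ← Real.sqrt_eq_rpow] at hhold
  -- ‖v‖ ≤ ∫ F dμ
  have hvdef : v = ∫ t in (0:ℝ)..L, u' t := by
    have h := hAC L ⟨hL.le, le_rfl⟩
    rw [hv, h, add_sub_cancel_left]
  set e : (Fin 2 → ℝ) →L[ℝ] EuclideanSpace ℝ (Fin 2) :=
    (EuclideanSpace.equiv (Fin 2) ℝ).symm.toContinuousLinearMap with he
  have henorm : ∀ x : Fin 2 → ℝ, ‖e x‖ = euclNorm x := by
    intro x
    rw [EuclideanSpace.norm_eq]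
    unfold euclNorm
    congr 1
    have h0 : e x 0 = x 0 := rfl
    have h1 : e x 1 = x 1 := rfl
    simp [Fin.sum_univ_two, Real.norm_eq_abs, sq_abs, h0, h1]
  have hvle : euclNorm v ≤ ∫ t, F t ∂μ := by
    calc euclNorm v = ‖e v‖ := (henorm v).symm
      _ = ‖∫ t in (0:ℝ)..L, e (u' t)‖ := by rw [hvdef, e.intervalIntegral_comp_comm hint]
      _ ≤ ∫ t in Set.uIoc 0 L, ‖e (u' t)‖ := intervalIntegral.norm_integral_le_integral_norm_uIoc
      _ = ∫ t, F t ∂μ := by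
          rw [Set.uIoc_of_le hL.le]
          exact integral_congr_ae (Filter.Eventually.of_forall fun t => henorm (u' t))
  -- assemble
  have hvsq : euclNorm v ≤ Real.sqrt (∫ t, F t ^ 2 ∂μ) * Real.sqrt L := hvle.trans hhold
  have hIeq : (∫ t in (0:ℝ)..L, euclNorm (u' t) ^ 2) = ∫ t, F t ^ 2 ∂μ := by
    rw [intervalIntegral.integral_of_le hL.le]
  rw [hIeq]
  refine hstep1.trans ?_
  set I : ℝ := ∫ t, F t ^ 2 ∂μ with hI
  have hsI : 0 ≤ Real.sqrt I := Real.sqrt_nonneg _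
  have hsL : 0 ≤ Real.sqrt L := Real.sqrt_nonneg _
  have hss : Real.sqrt L * Real.sqrt L = L := Real.mul_self_sqrt hL.le
  -- from  c * L * W ≤ N * W = ‖v‖ ≤ √I * √L
  have hkey2 : c * L * W ≤ Real.sqrt I * Real.sqrt L := by
    calc c * L * W ≤ N * W := mul_le_mul_of_nonneg_right hchord hWnn
      _ = euclNorm v := hNW
      _ ≤ Real.sqrt I * Real.sqrt L := hvsq
  -- goal : √L * (M * W) ≤ M / c * √I
  rw [div_mul_eq_mul_div, le_div_iff₀ hc]
  -- √L * (M * W) * c ≤ M * √I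
  have h4 : M * Real.sqrt L * (c * L * W) ≤ M * Real.sqrt L * (Real.sqrt I * Real.sqrt L) :=
    mul_le_mul_of_nonneg_left hkey2 (by positivity)
  have h5 : M * Real.sqrt L * (Real.sqrt I * Real.sqrt L) = M * Real.sqrt I * L := by
    calc M * Real.sqrt L * (Real.sqrt I * Real.sqrt L)
        = M * Real.sqrt I * (Real.sqrt L * Real.sqrt L) := by ring
      _ = M * Real.sqrt I * L := by rw [hss]
  have h6 := h4.trans_eq h5
  have h7 : L * (Real.sqrt L * (M * W) * c) ≤ L * (M * Real.sqrt I) := by nlinarith [h6]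
  exact le_of_mul_le_mul_left h7 hL
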